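/- Let m ≥ 2 be an integer, let (X,d) be a compact connected metric space in which every pair of points x,y is joined by a unit-speed geodesic (a map γ:[0,d(x,y)]→X with γ(0)=x, γ(d(x,y))=y and d(γ(s),γ(t))=|s−t| for all s,t), let μ be a finite Borel measure on X, and let f:X→[0,∞) be μ-integrable and μ-measurable with f^{m−1} μ-integrable. Let c>0 and δ∈(0,ω_m) be constants satisfying m·δ + δ^{(2m−3)/(m−1)} ≤ c^{−1}·δ^{(m−1)/m}. Assume that for every x∈X: (i) the function r ↦ V(x,r) is continuous and positive on (0,∞); (ii) V(x,r)/r^m → ω_m as r→0⁺; and (iii) for every r>0, V(x,r)^{(m−1)/m} ≤ c·( D⁺V(x,·)(r) + ∫_{B(x,r)} f dμ ). Then the diameter of (X,d) satisfies diam(X) ≤ 4·δ^{1−m}·∫_X f^{m−1} dμ. (This is a metric-measure formulation of the paper's main diameter estimate, where for a closed m-manifold isometrically immersed in a Riemannian manifold, f = |H| is the length of the mean curvature vector and hypothesis (iii) is the differential inequality that the Hoffman–Spruck Sobolev inequality yields when applied to distance-function cutoffs, valid under the paper's conditions b²(1−α)^{−2/m}(ω_m^{−1}Vol(M))^{2/m}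 ≤ 1 and 2ρ₀ ≤ R̄(M) with c = c(m,α).) -/

import Mathlib

open MeasureTheory Filter Set

/-- The volume `ω_m` of the unit ball in `ℝ^m`. -/
noncomputable def unitBallVolume (m : ℕ) : ℝ :=
  (volume (Metric.ball (0 : EuclideanSpace ℝ (Fin m)) 1)).toReal


lemma aux_lt_liminf {g : ℝ → ℝ} {F : Filter ℝ} [F.NeBot]
    (h0 : ∀ᶠ s in F, 0 ≤ g s) {b : ℝ} (hb : b < Filter.liminf g F) :
    ∀ᶠ s in F, b < g s := by
  rw [Filter.liminf_eq] at hb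
  have hne : Set.Nonempty {a : ℝ | ∀ᶠ s in F, a ≤ g s} := ⟨0, h0⟩
  by_cases hS : BddAbove {a : ℝ | ∀ᶠ s in F, a ≤ g s}
  · obtain ⟨a, ha, hba⟩ := exists_lt_of_lt_csSup hne hb
    exact ha.mono fun s hs => hba.trans_le hs
  · obtain ⟨a, ha, hba⟩ := not_bddAbove_iff.1 hS b
    exact ha.mono fun s hs => hba.trans_le hs

lemma chain_cover : ∀ n : ℕ, ∀ F : Finset (ℝ × ℝ), F.card ≤ n → ∀ a b : ℝ, a ≤ b →
    (∀ p ∈ F, 0 < p.2) →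
    (Set.Icc a b ⊆ ⋃ p ∈ F, Set.Ioo (p.1 - p.2) (p.1 + p.2)) →
    ∃ G₁ G₂ : Finset (ℝ × ℝ), G₁ ⊆ F ∧ G₂ ⊆ F ∧
      (∀ p ∈ G₁, ∀ q ∈ G₁, p ≠ q → p.2 + q.2 ≤ |p.1 - q.1|) ∧
      (∀ p ∈ G₂, ∀ q ∈ G₂, p ≠ q → p.2 + q.2 ≤ |p.1 - q.1|) ∧
      b - a ≤ (∑ p ∈ G₁, 2 * p.2) + (∑ p ∈ G₂, 2 * p.2) ∧
      (∀ p ∈ G₂, a ≤ p.1 - p.2) ∧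
      (∀ p ∈ G₁, a < p.1 + p.2) ∧ (∀ p ∈ G₂, a < p.1 + p.2) := by
  intro n
  induction n with
  | zero =>
    intro F hcard a b hab _ hcov
    exfalso
    have : a ∈ ⋃ p ∈ F, Set.Ioo (p.1 - p.2) (p.1 + p.2) := hcov ⟨le_refl a, hab⟩
    rw [Finset.card_eq_zero.1 (Nat.le_zero.1 hcard)] at this
    simpa using this
  | succ n IH =>
    intro F hcard a b hab hrad hcov
    -- the set of intervals containing `a`
    set T : Finset (ℝ × ℝ) := F.filter (fun p => p.1 - p.2 < a ∧ a < p.1 + p.2) with hT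
    have hTne : T.Nonempty := by
      have : a ∈ ⋃ p ∈ F, Set.Ioo (p.1 - p.2) (p.1 + p.2) := hcov ⟨le_refl a, hab⟩
      simp only [Set.mem_iUnion, Set.mem_Ioo] at this
      obtain ⟨p, hpF, hp1, hp2⟩ := this
      exact ⟨p, Finset.mem_filter.2 ⟨hpF, hp1, hp2⟩⟩
    obtain ⟨p₁, hp₁T, hp₁max⟩ := T.exists_max_image (fun p => p.1 + p.2) hTne
    have hp₁F : p₁ ∈ F := (Finset.mem_filter.1 hp₁T).1
    have hp₁l : p₁.1 - p₁.2 < a := (Finset.mem_filter.1 hp₁T).2.1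
    have hp₁r : a < p₁.1 + p₁.2 := (Finset.mem_filter.1 hp₁T).2.2
    set β := p₁.1 + p₁.2 with hβ
    by_cases hβb : b < β
    · refine ⟨{p₁}, ∅, Finset.singleton_subset_iff.2 hp₁F, Finset.empty_subset F, ?_, ?_, ?_, ?_, ?_, ?_⟩
      · intro p hp q hq hpq
        rw [Finset.mem_singleton] at hp hq
        exact absurd (hp.trans hq.symm) hpq
      · simp
      · rw [Finset.sum_singleton, Finset.sum_empty]
        have : 2 * p₁.2 = (p₁.1 + p₁.2) - (p₁.1 - p₁.2) := by ring
        rw [this]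
        linarith
      · simp
      · intro p hp; rw [Finset.mem_singleton] at hp; rw [hp]; exact hp₁r
      · simp
    · push_neg at hβb  -- β ≤ b
      have hcard' : (F.erase p₁).card ≤ n := by
        have := Finset.card_erase_of_mem hp₁F
        omega
      have hcov' : Set.Icc β b ⊆ ⋃ p ∈ F.erase p₁, Set.Ioo (p.1 - p.2) (p.1 + p.2) := by
        intro t ht
        have htab : t ∈ Set.Icc a b := ⟨le_trans (le_of_lt hp₁r) ht.1, ht.2⟩
        have := hcov htab
        simp only [Set.mem_iUnion, Set.mem_Ioo] at this ⊢
        obtain ⟨p, hpF, h1, h2⟩ := this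
        refine ⟨p, Finset.mem_erase.2 ⟨?_, hpF⟩, h1, h2⟩
        rintro rfl
        exact absurd ht.1 (not_le.2 h2)
      obtain ⟨G₁', G₂', hG₁'sub, hG₂'sub, hsep₁', hsep₂', hsum', hleft₂', hright₁', hright₂'⟩ :=
        IH (F.erase p₁) hcard' β b hβb (fun p hp => hrad p (Finset.mem_of_mem_erase hp)) hcov'
      -- new G₂' members start at or after β
      have hG₁'left : ∀ p ∈ G₁', a ≤ p.1 - p.2 := by
        intro p hp
        by_contra hcon
        push_neg at hcon
        have hpF : p ∈ F := Finset.mem_of_mem_erase (hG₁'sub hp)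
        have hpT : p ∈ T := Finset.mem_filter.2 ⟨hpF, hcon, lt_trans hp₁r (hright₁' p hp)⟩
        exact absurd (hp₁max p hpT) (not_le.2 (hright₁' p hp))
      have hp₁notin : p₁ ∉ G₂' := by
        intro hcon
        have := hleft₂' p₁ hcon
        have h2 := hrad p₁ hp₁F
        linarith
      refine ⟨insert p₁ G₂', G₁', ?_, fun p hp => Finset.mem_of_mem_erase (hG₁'sub hp),
        ?_, hsep₁', ?_, ?_, ?_, ?_⟩
      · intro p hp
        rcases Finset.mem_insert.1 hp with rfl | hp
        · exact hp₁F
        · exact Finset.mem_of_mem_erase (hG₂'sub hp)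
      · -- separation in insert p₁ G₂'
        have hkey : ∀ q ∈ G₂', p₁.2 + q.2 ≤ |p₁.1 - q.1| := by
          intro q hq
          have h1 : β ≤ q.1 - q.2 := hleft₂' q hq
          have : p₁.1 - q.1 ≤ -(p₁.2 + q.2) := by
            rw [hβ] at h1; linarith
          rw [abs_sub_comm]
          calc p₁.2 + q.2 ≤ q.1 - p₁.1 := by linarith
          _ ≤ |q.1 - p₁.1| := le_abs_self _
        intro p hp q hq hpq
        rcases Finset.mem_insert.1 hp with hp' | hp' <;> rcases Finset.mem_insert.1 hq with hq' | hq'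
        · exact absurd (hp'.trans hq'.symm) hpq
        · rw [hp']; exact hkey q hq'
        · rw [hq', abs_sub_comm, add_comm]; exact hkey p hp'
        · exact hsep₂' p hp' q hq' hpq
      · -- sum
        rw [Finset.sum_insert hp₁notin]
        have h2 : 2 * p₁.2 = (p₁.1 + p₁.2) - (p₁.1 - p₁.2) := by ring
        have hb2 : β - a ≤ 2 * p₁.2 := by rw [h2, hβ]; linarith
        linarith
      · exact hG₁'left
      · intro p hp
        rcases Finset.mem_insert.1 hp with rfl | hp
        · exact hp₁r
        · have := hleft₂' p hp
          have h2 := hrad p (Finset.mem_of_mem_erase (hG₂'sub hp))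
          have : a < p.1 - p.2 := lt_of_lt_of_le hp₁r this
          linarith
      · intro p hp
        exact lt_trans hp₁r (hright₁' p hp)

lemma aux_holder {X : Type*} [MeasurableSpace X] (μ : Measure X) [IsFiniteMeasure μ]
    (m : ℕ) (hm : 2 ≤ m) (f : X → ℝ) (hf0 : ∀ x, 0 ≤ f x) (hfmeas : Measurable f)
    (hfmint : Integrable (fun x => f x ^ (m - 1)) μ) (B : Set X) :
    ∫ y in B, f y ∂μ ≤ (∫ y in B, f y ^ (m - 1) ∂μ) ^ (1/((m:ℝ)-1)) *
      ((μ B).toReal) ^ (((m:ℝ)-2)/((m:ℝ)-1)) := by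
  have hcast : ((m:ℝ) - 1) = ((m - 1 : ℕ) : ℝ) := by
    rw [Nat.cast_sub (le_trans one_le_two hm), Nat.cast_one]
  rcases eq_or_lt_of_le hm with hm2 | hm3
  · -- m = 2
    subst hm2
    norm_num
  · -- 3 ≤ m
    have hmR : (3:ℝ) ≤ (m:ℝ) := by exact_mod_cast hm3
    have hp1 : 1 < (m:ℝ) - 1 := by linarith
    have hp0 : 0 < (m:ℝ) - 1 := lt_trans one_pos hp1
    have hpq : ((m:ℝ) - 1).HolderConjugate (Real.conjExponent ((m:ℝ) - 1)) :=
      Real.HolderConjugate.conjExponent hp1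
    have hfpow : ∀ y : X, f y ^ ((m:ℝ) - 1) = f y ^ (m - 1) := by
      intro y
      rw [hcast, Real.rpow_natCast]
    have hq0 : ENNReal.ofReal ((m:ℝ) - 1) ≠ 0 := by
      rw [Ne, ENNReal.ofReal_eq_zero, not_le]; exact hp0
    have hqt : ENNReal.ofReal ((m:ℝ) - 1) ≠ ⊤ := ENNReal.ofReal_ne_top
    have hfLp : MemLp f (ENNReal.ofReal ((m:ℝ) - 1)) μ := by
      refine (memLp_norm_rpow_iff (q := ENNReal.ofReal ((m:ℝ) - 1)) (p := ENNReal.ofReal ((m:ℝ) - 1))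
        hfmeas.aestronglyMeasurable hq0 hqt).1 ?_
      rw [ENNReal.div_self hq0 hqt, memLp_one_iff_integrable]
      apply hfmint.congr
      filter_upwards with y
      rw [ENNReal.toReal_ofReal hp0.le, Real.norm_of_nonneg (hf0 y), hfpow y]
    have key := integral_mul_le_Lp_mul_Lq_of_nonneg (μ := μ.restrict B) hpq
      (Filter.Eventually.of_forall hf0)
      (Filter.Eventually.of_forall (fun _ => (zero_le_one : (0:ℝ) ≤ 1)))
      (hfLp.restrict B) (memLp_const 1)
    simp only [mul_one, hfpow, Real.one_rpow] at key
    rw [integral_const, Measure.real, Measure.restrict_apply_univ, smul_eq_mul, mul_one] at key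
    have hexp : 1 / Real.conjExponent ((m:ℝ) - 1) = ((m:ℝ)-2)/((m:ℝ)-1) := by
      rw [Real.conjExponent, one_div_div]
      ring_nf
    rw [hexp] at key
    exact key
lemma aux_ode (V Lf W W' : ℝ → ℝ) (hmono : Monotone V)
    (hVcont : ContinuousOn V (Set.Ioi 0))
    (hL : ∀ r : ℝ, Lf r = Filter.liminf (fun s : ℝ => (V (r + s) - V r) / s)
      (nhdsWithin 0 (Set.Ioi 0)))
    (hW : ∀ x : ℝ, HasDerivAt W (W' x) x)
    (a R : ℝ) (h0a : 0 < a) (haR : a < R) (hini : W a ≤ V a)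
    (hbound : ∀ x ∈ Set.Ico a R, V x = W x → W' x < Lf x) :
    W R ≤ V R := by
  have hsub : Set.Icc a R ⊆ Set.Ioi 0 := fun t ht => lt_of_lt_of_le h0a ht.1
  have slope_ev : ∀ x b : ℝ, b < Lf x → ∀ᶠ w in nhdsWithin x (Set.Ioi x),
      b < (V w - V x) / (w - x) := by
    intro x b hb
    rw [hL x] at hb
    have h0 : ∀ᶠ s in nhdsWithin 0 (Set.Ioi (0:ℝ)), 0 ≤ (V (x + s) - V x) / s := by
      filter_upwards [self_mem_nhdsWithin] with s hs
      exact div_nonneg (sub_nonneg.2 (hmono (by linarith [Set.mem_Ioi.1 hs]))) (le_of_lt hs)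
    have hev := aux_lt_liminf h0 hb
    have hmap : Tendsto (fun w : ℝ => w - x) (nhdsWithin x (Set.Ioi x))
        (nhdsWithin 0 (Set.Ioi (0:ℝ))) := by
      apply Filter.Tendsto.inf
      · have : Tendsto (fun w : ℝ => w - x) (nhds x) (nhds (x - x)) :=
          (continuous_id.sub continuous_const).tendsto x
        rwa [sub_self] at this
      · exact tendsto_principal_principal.2 (fun w hw => by
          simpa [Set.mem_Ioi] using sub_pos.2 (Set.mem_Ioi.1 hw))
    filter_upwards [hmap.eventually hev] with w hw
    have hxw : x + (w - x) = w := by ring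
    rwa [hxw] at hw
  have hf' : ∀ x ∈ Set.Ico a R, ∀ r : ℝ, -(Lf x) < r →
      ∃ᶠ w in nhdsWithin x (Set.Ioi x), slope (fun t => -V t) x w < r := by
    intro x _ r hr
    have h1 : -r < Lf x := by linarith
    apply Filter.Eventually.frequently
    filter_upwards [slope_ev x (-r) h1, self_mem_nhdsWithin] with w hw hw'
    have hwx : 0 < w - x := sub_pos.2 hw'
    rw [slope_def_field, div_lt_iff₀ hwx]
    have := (lt_div_iff₀ hwx).1 hw
    linarith
  have hbound' : ∀ x ∈ Set.Ico a R, (fun t => -V t) x = (fun t => -W t) x →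
      -(Lf x) < -W' x := by
    intro x hx hVx
    simp only [neg_inj] at hVx
    exact neg_lt_neg (hbound x hx hVx)
  have hcomp := image_le_of_liminf_slope_right_lt_deriv_boundary
    (f := fun t => -V t) (f' := fun t => -(Lf t)) (a := a) (b := R)
    (B := fun t => -W t) (B' := fun t => -W' t)
    ((hVcont.mono hsub).neg) hf' (neg_le_neg hini) (fun x => (hW x).neg) hbound'
  have := hcomp (Set.right_mem_Icc.2 haR.le)
  simpa using this

/-- **Main diameter estimate (metric-measure form).** If `(X,d)` is a compact connected
geodesic metric space with a finite Borel measure `μ`, `f : X → [0,∞)` with `f` and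
`f^(m-1)` integrable, and `c > 0`, `δ ∈ (0, ω_m)` satisfy
`m δ + δ^((2m-3)/(m-1)) ≤ c⁻¹ δ^((m-1)/m)`, and for each `x` the volume function
`V(x,r) = μ(B(x,r))` is continuous and positive on `(0,∞)`, satisfies `V(x,r)/r^m → ω_m`
as `r → 0⁺`, and the Sobolev-type differential inequality
`V(x,r)^((m-1)/m) ≤ c (D⁺V(x,·)(r) + ∫_{B(x,r)} f dμ)` holds for all `r > 0`,
then `diam X ≤ 4 δ^(1-m) ∫_X f^(m-1) dμ`. -/
theorem diameter_bound_of_sobolev_inequality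
    {X : Type*} [MetricSpace X] [CompactSpace X] [ConnectedSpace X]
    [MeasurableSpace X] [BorelSpace X]
    (μ : Measure X) [IsFiniteMeasure μ]
    (m : ℕ) (hm : 2 ≤ m)
    (geodesic : ∀ x y : X, ∃ γ : ℝ → X, γ 0 = x ∧ γ (dist x y) = y ∧
      ∀ s ∈ Set.Icc (0 : ℝ) (dist x y), ∀ t ∈ Set.Icc (0 : ℝ) (dist x y),
        dist (γ s) (γ t) = |s - t|)
    (f : X → ℝ) (hf0 : ∀ x, 0 ≤ f x) (hfmeas : Measurable f)
    (hfint : Integrable f μ) (hfmint : Integrable (fun x => f x ^ (m - 1)) μ)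
    (c δ : ℝ) (hc : 0 < c) (hδ0 : 0 < δ) (hδω : δ < unitBallVolume m)
    (hδc : (m : ℝ) * δ + δ ^ ((2 * (m : ℝ) - 3) / ((m : ℝ) - 1)) ≤
      c⁻¹ * δ ^ (((m : ℝ) - 1) / (m : ℝ)))
    (hVcont : ∀ x : X,
      ContinuousOn (fun r : ℝ => (μ (Metric.ball x r)).toReal) (Set.Ioi 0))
    (hVpos : ∀ x : X, ∀ r : ℝ, 0 < r → 0 < (μ (Metric.ball x r)).toReal)
    (hVlim : ∀ x : X,
      Tendsto (fun r : ℝ => (μ (Metric.ball x r)).toReal / r ^ m)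
        (nhdsWithin 0 (Set.Ioi 0)) (nhds (unitBallVolume m)))
    (hSob : ∀ x : X, ∀ r : ℝ, 0 < r →
      (μ (Metric.ball x r)).toReal ^ (((m : ℝ) - 1) / (m : ℝ)) ≤
        c * (Filter.liminf
              (fun s : ℝ =>
                ((μ (Metric.ball x (r + s))).toReal - (μ (Metric.ball x r)).toReal) / s)
              (nhdsWithin 0 (Set.Ioi 0))
            + ∫ y in Metric.ball x r, f y ∂μ)) :
    Metric.diam (Set.univ : Set X) ≤ 4 * δ ^ (1 - (m : ℝ)) * ∫ x, f x ^ (m - 1) ∂μ := by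
  have hm1 : 1 ≤ m := le_trans one_le_two hm
  have hmR : (2:ℝ) ≤ (m:ℝ) := by exact_mod_cast hm
  have hm0ne : ((m:ℝ)) ≠ 0 := by linarith
  have hm1ne : ((m:ℝ) - 1) ≠ 0 := by linarith
  have hcast : ((m:ℝ) - 1) = ((m - 1 : ℕ) : ℝ) := by
    rw [Nat.cast_sub hm1, Nat.cast_one]
  have hfm0 : ∀ w : X, (0:ℝ) ≤ f w ^ (m - 1) := fun w => pow_nonneg (hf0 w) _
  have hI0 : (0:ℝ) ≤ ∫ w, f w ^ (m - 1) ∂μ := integral_nonneg hfm0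
  have hδm1 : (0:ℝ) < δ ^ (m - 1) := pow_pos hδ0 _
  -- Key existence of a good radius at every point
  have key : ∀ z : X, ∃ r : ℝ, 0 < r ∧
      δ ^ (m - 1) * r ≤ ∫ w in Metric.ball z r, f w ^ (m - 1) ∂μ := by
    intro z
    by_contra hcon
    push_neg at hcon
    -- growth of volume
    have growth : ∀ R : ℝ, 0 < R → δ * R ^ m ≤ (μ (Metric.ball z R)).toReal := by
      intro R hR
      have hVini : ∀ᶠ r in nhdsWithin 0 (Set.Ioi (0:ℝ)),
          δ * r ^ m < (μ (Metric.ball z r)).toReal := by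
        have h1 := (hVlim z).eventually (eventually_gt_nhds hδω)
        filter_upwards [h1, self_mem_nhdsWithin] with r hr1 hr2
        have hr : (0:ℝ) < r := hr2
        have := (lt_div_iff₀ (pow_pos hr m)).1 hr1
        linarith
      obtain ⟨a, haV, haR⟩ :=
        (hVini.and (Ioo_mem_nhdsGT_of_mem (Set.left_mem_Ico.2 hR))).exists
      have ha0 : 0 < a := haR.1
      have hmono : Monotone (fun r : ℝ => (μ (Metric.ball z r)).toReal) := by
        intro u v huv
        exact ENNReal.toReal_mono (measure_ne_top μ _)
          (measure_mono (Metric.ball_subset_ball huv))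
      have hbound : ∀ x ∈ Set.Ico a R,
          (fun r : ℝ => (μ (Metric.ball z r)).toReal) x = (fun t : ℝ => δ * t ^ m) x →
          (fun t : ℝ => δ * ((m:ℝ) * t ^ (m - 1))) x <
          (fun r : ℝ => Filter.liminf
              (fun s : ℝ =>
                ((μ (Metric.ball z (r + s))).toReal - (μ (Metric.ball z r)).toReal) / s)
              (nhdsWithin 0 (Set.Ioi 0))) x := by
        intro x hx hVx
        simp only [] at hVx ⊢
        have hx0 : 0 < x := lt_of_lt_of_le ha0 hx.1
        have hVp : 0 < (μ (Metric.ball z x)).toReal := hVpos z x hx0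
        have hsm := hcon x hx0
        have hP0 : 0 ≤ ∫ w in Metric.ball z x, f w ^ (m - 1) ∂μ :=
          integral_nonneg fun w => hfm0 w
        have hexp1 : (0:ℝ) < 1 / ((m:ℝ) - 1) := by
          apply div_pos one_pos; linarith
        have h1 : (∫ w in Metric.ball z x, f w ^ (m - 1) ∂μ) ^ (1/((m:ℝ)-1)) <
            (δ ^ (m - 1) * x) ^ (1/((m:ℝ)-1)) :=
          Real.rpow_lt_rpow hP0 hsm hexp1
        have h2 : (δ ^ (m - 1) * x) ^ (1/((m:ℝ)-1)) = δ * x ^ (1/((m:ℝ)-1)) := by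
          rw [Real.mul_rpow (pow_nonneg hδ0.le _) hx0.le]
          congr 1
          rw [← Real.rpow_natCast δ (m - 1), ← Real.rpow_mul hδ0.le, ← hcast,
            mul_one_div_cancel hm1ne, Real.rpow_one]
        have h3 : ∫ w in Metric.ball z x, f w ∂μ <
            δ * x ^ (1/((m:ℝ)-1)) *
              (μ (Metric.ball z x)).toReal ^ (((m:ℝ)-2)/((m:ℝ)-1)) := by
          refine lt_of_le_of_lt (aux_holder μ m hm f hf0 hfmeas hfmint (Metric.ball z x)) ?_
          exact mul_lt_mul_of_pos_right (h1.trans_eq h2) (Real.rpow_pos_of_pos hVp _)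
        have hsob := hSob z x hx0
        set Lx := Filter.liminf
              (fun s : ℝ =>
                ((μ (Metric.ball z (x + s))).toReal - (μ (Metric.ball z x)).toReal) / s)
              (nhdsWithin 0 (Set.Ioi 0)) with hLx
        have h4 : (μ (Metric.ball z x)).toReal ^ (((m:ℝ)-1)/(m:ℝ)) <
            c * Lx + c * (δ * x ^ (1/((m:ℝ)-1)) *
              (μ (Metric.ball z x)).toReal ^ (((m:ℝ)-2)/((m:ℝ)-1))) := by
          refine lt_of_le_of_lt hsob ?_
          rw [mul_add]
          exact add_lt_add_right (mul_lt_mul_of_pos_left h3 hc) _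
        rw [hVx] at h4
        have hA1 : (δ * x ^ m) ^ (((m:ℝ)-1)/(m:ℝ)) =
            δ ^ (((m:ℝ)-1)/(m:ℝ)) * x ^ ((m:ℝ)-1) := by
          rw [Real.mul_rpow hδ0.le (pow_nonneg hx0.le m)]
          congr 1
          rw [← Real.rpow_natCast x m, ← Real.rpow_mul hx0.le]
          congr 1
          field_simp
        have hA2 : δ * x ^ (1/((m:ℝ)-1)) * (δ * x ^ m) ^ (((m:ℝ)-2)/((m:ℝ)-1)) =
            δ ^ ((2*(m:ℝ)-3)/((m:ℝ)-1)) * x ^ ((m:ℝ)-1) := by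
          have he3 : 1 + ((m:ℝ)-2)/((m:ℝ)-1) = (2*(m:ℝ)-3)/((m:ℝ)-1) := by
            field_simp
            ring
          have heX : 1/((m:ℝ)-1) + (m:ℝ)*(((m:ℝ)-2)/((m:ℝ)-1)) = (m:ℝ)-1 := by
            field_simp
            ring
          calc δ * x ^ (1/((m:ℝ)-1)) * (δ * x ^ m) ^ (((m:ℝ)-2)/((m:ℝ)-1))
              = δ * x ^ (1/((m:ℝ)-1)) *
                (δ ^ (((m:ℝ)-2)/((m:ℝ)-1)) * (x ^ m) ^ (((m:ℝ)-2)/((m:ℝ)-1))) := by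
                rw [Real.mul_rpow hδ0.le (pow_nonneg hx0.le m)]
            _ = (δ ^ (1:ℝ) * δ ^ (((m:ℝ)-2)/((m:ℝ)-1))) *
                (x ^ (1/((m:ℝ)-1)) * (x ^ m) ^ (((m:ℝ)-2)/((m:ℝ)-1))) := by
                rw [Real.rpow_one]; ring
            _ = δ ^ (1 + ((m:ℝ)-2)/((m:ℝ)-1)) *
                (x ^ (1/((m:ℝ)-1)) * x ^ ((m:ℝ) * (((m:ℝ)-2)/((m:ℝ)-1)))) := by
                rw [← Real.rpow_add hδ0, ← Real.rpow_natCast x m, ← Real.rpow_mul hx0.le]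
            _ = δ ^ (1 + ((m:ℝ)-2)/((m:ℝ)-1)) *
                x ^ (1/((m:ℝ)-1) + (m:ℝ) * (((m:ℝ)-2)/((m:ℝ)-1))) := by
                rw [← Real.rpow_add hx0]
            _ = δ ^ ((2*(m:ℝ)-3)/((m:ℝ)-1)) * x ^ ((m:ℝ)-1) := by
                rw [he3, heX]
        rw [hA1, hA2] at h4
        have hXP : 0 < x ^ ((m:ℝ)-1) := Real.rpow_pos_of_pos hx0 _
        have hδc' : c * ((m:ℝ)*δ) + c * δ ^ ((2*(m:ℝ)-3)/((m:ℝ)-1)) ≤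
            δ ^ (((m:ℝ)-1)/(m:ℝ)) := by
          have h := mul_le_mul_of_nonneg_left hδc hc.le
          rw [mul_add, ← mul_assoc c c⁻¹, mul_inv_cancel₀ hc.ne', one_mul] at h
          exact h
        have h5 : c * ((m:ℝ)*δ) * x ^ ((m:ℝ)-1) +
            c * δ ^ ((2*(m:ℝ)-3)/((m:ℝ)-1)) * x ^ ((m:ℝ)-1) ≤
            δ ^ (((m:ℝ)-1)/(m:ℝ)) * x ^ ((m:ℝ)-1) := by
          have := mul_le_mul_of_nonneg_right hδc' hXP.le
          rw [add_mul] at this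
          exact this
        have h6 : c * (δ * ((m:ℝ) * x ^ ((m:ℝ)-1))) < c * Lx := by nlinarith
        have h7 : δ * ((m:ℝ) * x ^ ((m:ℝ)-1)) < Lx := (mul_lt_mul_iff_right₀ hc).1 h6
        have hxnat : x ^ (m - 1) = x ^ ((m:ℝ)-1) := by
          rw [← Real.rpow_natCast x (m - 1), ← hcast]
        rw [hxnat]
        exact h7
      have := aux_ode (fun r : ℝ => (μ (Metric.ball z r)).toReal)
        (fun r : ℝ => Filter.liminf
            (fun s : ℝ =>
              ((μ (Metric.ball z (r + s))).toReal - (μ (Metric.ball z r)).toReal) / s)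
            (nhdsWithin 0 (Set.Ioi 0)))
        (fun t : ℝ => δ * t ^ m) (fun t : ℝ => δ * ((m:ℝ) * t ^ (m - 1)))
        hmono (hVcont z) (fun r => rfl)
        (fun w => (hasDerivAt_pow m w).const_mul δ)
        a R ha0 haR.2 (le_of_lt haV) hbound
      exact this
    -- contradiction with finiteness of μ
    have hR₀1 : (1:ℝ) ≤ max 1 ((μ (Set.univ : Set X)).toReal / δ + 1) := le_max_left _ _
    have hR₀0 : (0:ℝ) < max 1 ((μ (Set.univ : Set X)).toReal / δ + 1) :=
      lt_of_lt_of_le one_pos hR₀1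
    have h7 := growth _ hR₀0
    have h8 : (μ (Metric.ball z (max 1 ((μ (Set.univ : Set X)).toReal / δ + 1)))).toReal ≤
        (μ (Set.univ : Set X)).toReal :=
      ENNReal.toReal_mono (measure_ne_top μ _) (measure_mono (Set.subset_univ _))
    have h9 : max 1 ((μ (Set.univ : Set X)).toReal / δ + 1) ≤
        (max 1 ((μ (Set.univ : Set X)).toReal / δ + 1)) ^ m :=
      le_self_pow₀ hR₀1 (by omega)
    have h10 : (μ (Set.univ : Set X)).toReal / δ + 1 ≤
        max 1 ((μ (Set.univ : Set X)).toReal / δ + 1) := le_max_right _ _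
    have heq : δ * ((μ (Set.univ : Set X)).toReal / δ + 1) =
        (μ (Set.univ : Set X)).toReal + δ := by
      field_simp
    have h11 := mul_le_mul_of_nonneg_left h10 hδ0.le
    have h12 := mul_le_mul_of_nonneg_left h9 hδ0.le
    rw [heq] at h11
    linarith
  -- choose good radii
  choose ρ hρ0 hρle using key
  have hRHS0 : 0 ≤ 4 * δ ^ (1 - (m:ℝ)) * ∫ w, f w ^ (m - 1) ∂μ := by
    apply mul_nonneg (mul_nonneg (by norm_num) (Real.rpow_nonneg hδ0.le _)) hI0
  refine Metric.diam_le_of_forall_dist_le hRHS0 fun x _ y _ => ?_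
  obtain ⟨γ, hγ0, hγL, hγiso⟩ := geodesic x y
  have hL0 : (0:ℝ) ≤ dist x y := dist_nonneg
  have hcov : Set.Icc (0:ℝ) (dist x y) ⊆
      ⋃ t ∈ Set.Icc (0:ℝ) (dist x y), Set.Ioo (t - ρ (γ t)) (t + ρ (γ t)) := by
    intro t ht
    exact Set.mem_biUnion ht ⟨by linarith [hρ0 (γ t)], by linarith [hρ0 (γ t)]⟩
  obtain ⟨sb, hsb_sub, hsb_fin, hsb_cov⟩ :=
    isCompact_Icc.elim_finite_subcover_image (fun t _ => isOpen_Ioo) hcov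
  classical
  set F : Finset (ℝ × ℝ) := hsb_fin.toFinset.image (fun t => (t, ρ (γ t))) with hF
  have hFmem : ∀ p ∈ F, p.1 ∈ Set.Icc (0:ℝ) (dist x y) ∧ p.2 = ρ (γ p.1) := by
    intro p hp
    rw [hF, Finset.mem_image] at hp
    obtain ⟨t, ht, rfl⟩ := hp
    rw [Set.Finite.mem_toFinset] at ht
    exact ⟨hsb_sub ht, rfl⟩
  have hFrad : ∀ p ∈ F, 0 < p.2 := by
    intro p hp
    rw [(hFmem p hp).2]
    exact hρ0 (γ p.1)
  have hFcov : Set.Icc (0:ℝ) (dist x y) ⊆ ⋃ p ∈ F, Set.Ioo (p.1 - p.2) (p.1 + p.2) := by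
    intro t ht
    have := hsb_cov ht
    simp only [Set.mem_iUnion, exists_prop] at this
    obtain ⟨u, hu, htu⟩ := this
    have huF : (u, ρ (γ u)) ∈ F := by
      rw [hF, Finset.mem_image]
      exact ⟨u, (Set.Finite.mem_toFinset _).2 hu, rfl⟩
    exact Set.mem_biUnion huF htu
  obtain ⟨G₁, G₂, hG₁F, hG₂F, hsep₁, hsep₂, hsum, _, _, _⟩ :=
    chain_cover F.card F le_rfl 0 (dist x y) hL0 hFrad hFcov
  have famBound : ∀ G : Finset (ℝ × ℝ), G ⊆ F →
      (∀ p ∈ G, ∀ q ∈ G, p ≠ q → p.2 + q.2 ≤ |p.1 - q.1|) →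
      δ ^ (m - 1) * ∑ p ∈ G, p.2 ≤ ∫ w, f w ^ (m - 1) ∂μ := by
    intro G hGF hGsep
    have hball : ∀ p ∈ G, δ ^ (m - 1) * p.2 ≤
        ∫ w in Metric.ball (γ p.1) p.2, f w ^ (m - 1) ∂μ := by
      intro p hp
      rw [(hFmem p (hGF hp)).2]
      exact hρle (γ p.1)
    have hdisj : Set.Pairwise ↑G
        (Function.onFun Disjoint (fun p : ℝ × ℝ => Metric.ball (γ p.1) p.2)) := by
      intro p hp q hq hpq
      have h1 := hGsep p hp q hq hpq
      apply Metric.ball_disjoint_ball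
      rw [hγiso p.1 (hFmem p (hGF hp)).1 q.1 (hFmem q (hGF hq)).1]
      exact h1
    have hsum2 : ∑ p ∈ G, ∫ w in Metric.ball (γ p.1) p.2, f w ^ (m - 1) ∂μ =
        ∫ w in ⋃ p ∈ G, Metric.ball (γ p.1) p.2, f w ^ (m - 1) ∂μ :=
      (integral_biUnion_finset G (fun p _ => measurableSet_ball) hdisj
        (fun p _ => hfmint.integrableOn)).symm
    have hle2 : ∫ w in ⋃ p ∈ G, Metric.ball (γ p.1) p.2, f w ^ (m - 1) ∂μ ≤
        ∫ w, f w ^ (m - 1) ∂μ :=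
      setIntegral_le_integral hfmint (Filter.Eventually.of_forall hfm0)
    calc δ ^ (m - 1) * ∑ p ∈ G, p.2 = ∑ p ∈ G, δ ^ (m - 1) * p.2 := Finset.mul_sum _ _ _
      _ ≤ ∑ p ∈ G, ∫ w in Metric.ball (γ p.1) p.2, f w ^ (m - 1) ∂μ :=
          Finset.sum_le_sum hball
      _ = ∫ w in ⋃ p ∈ G, Metric.ball (γ p.1) p.2, f w ^ (m - 1) ∂μ := hsum2
      _ ≤ ∫ w, f w ^ (m - 1) ∂μ := hle2
  have hB1 := famBound G₁ hG₁F hsep₁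
  have hB2 := famBound G₂ hG₂F hsep₂
  have hδinv : δ ^ (1 - (m:ℝ)) = (δ ^ (m - 1))⁻¹ := by
    rw [← Real.rpow_natCast δ (m - 1), ← Real.rpow_neg hδ0.le, ← hcast]
    congr 1
    ring
  have hs1 : ∑ p ∈ G₁, 2 * p.2 = 2 * ∑ p ∈ G₁, p.2 := (Finset.mul_sum _ _ _).symm
  have hs2 : ∑ p ∈ G₂, 2 * p.2 = 2 * ∑ p ∈ G₂, p.2 := (Finset.mul_sum _ _ _).symm
  have h1 : ∑ p ∈ G₁, p.2 ≤ δ ^ (1 - (m:ℝ)) * ∫ w, f w ^ (m - 1) ∂μ := by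
    rw [hδinv, ← div_eq_inv_mul, le_div_iff₀ hδm1]
    linarith
  have h2 : ∑ p ∈ G₂, p.2 ≤ δ ^ (1 - (m:ℝ)) * ∫ w, f w ^ (m - 1) ∂μ := by
    rw [hδinv, ← div_eq_inv_mul, le_div_iff₀ hδm1]
    linarith
  rw [hs1, hs2] at hsum
  linarith
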